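/- Let G₁ and G₂ be finite simple graphs on N₁ and N₂ vertices respectively, and suppose that for i = 1, 2 the cone over G_i admits a swift chiral quantum walk starting from its apex, i.e. there exists a chiral adjacency matrix H_i on the cone over G_i whose apex return probability equals cos²(√N_i · t) for all t ≥ 0. Then the cone over the disjoint union G₁ ⊔ G₂ admits a swift chiral quantum walk starting from its apex: there exists a chiral adjacency matrix H on the cone over G₁ ⊔ G₂ whose apex return probability equals cos²(√(N₁+N₂) · t) for all t ≥ 0. -/

import Mathlib

open Matrix

/-- The cone over a graph `G`: one new vertex (the apex, `none`) adjacent to every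
vertex of `G`. -/
def coneGraph {V : Type*} (G : SimpleGraph V) : SimpleGraph (Option V) where
  Adj x y :=
    match x, y with
    | none, none => False
    | none, some _ => True
    | some _, none => True
    | some a, some b => G.Adj a b
  symm := by
    constructor
    rintro (_ | a) (_ | b) h
    · exact h
    · exact trivial
    · exact trivial
    · exact G.adj_symm h
  loopless := by
    constructor
    rintro (_ | a) h
    · exact h
    · exact G.loopless.irrefl a h

/-- A chiral adjacency matrix on a simple graph `G`: a Hermitian matrix whose entries
have modulus one on edges of `G` and vanish elsewhere. -/
def IsChiralAdjacency {V : Type*} (G : SimpleGraph V) (A : Matrix V V ℂ) : Prop :=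
  A.IsHermitian ∧ (∀ j k, G.Adj j k → ‖A j k‖ = 1) ∧
    ∀ j k, ¬ G.Adj j k → A j k = 0

namespace SwiftAux
open Matrix NormedSpace

variable {V : Type*} [Fintype V] [DecidableEq V]


lemma entry_exp (A : Matrix V V ℂ) (x y : V) :
    exp A x y = ∑' n : ℕ, (n.factorial : ℂ)⁻¹ * (A ^ n) x y := by
  letI : SeminormedRing (Matrix V V ℂ) := Matrix.linftyOpSemiNormedRing
  letI : NormedRing (Matrix V V ℂ) := Matrix.linftyOpNormedRing
  letI : NormedAlgebra ℂ (Matrix V V ℂ) := Matrix.linftyOpNormedAlgebra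
  have hs : Summable fun n : ℕ => ((Nat.factorial n : ℂ))⁻¹ • A ^ n := expSeries_summable' A
  rw [exp_eq_tsum (𝕂 := ℂ)]
  show (∑' n : ℕ, ((Nat.factorial n : ℂ))⁻¹ • A ^ n) x y = _
  erw [tsum_apply hs, tsum_apply (Pi.summable.mp hs x)]
  simp [Matrix.smul_apply, smul_eq_mul]

lemma pow_even_col {H : Matrix V V ℂ} {v : V} {N : ℕ}
    (hcol : ∀ x, (H ^ 2) x v = if x = v then (N : ℂ) else 0) (k : ℕ) (x : V) :
    (H ^ (2 * k)) x v = if x = v then ((N : ℂ)) ^ k else 0 := by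
  induction k with
  | zero => simp [Matrix.one_apply, eq_comm]
  | succ k ih =>
    have h2 : H ^ (2 * (k + 1)) = H ^ (2 * k) * H ^ 2 := by
      rw [← pow_add]; ring_nf
    rw [h2, mul_apply]
    rw [Finset.sum_eq_single v]
    · rw [hcol v, if_pos rfl, ih]
      by_cases h : x = v <;> simp [h, pow_succ]
    · intro b _ hb
      rw [hcol b, if_neg hb, mul_zero]
    · simp

lemma pow_odd_diag {H : Matrix V V ℂ} {v : V} {N : ℕ}
    (h0 : H v v = 0)
    (hcol : ∀ x, (H ^ 2) x v = if x = v then (N : ℂ) else 0) (k : ℕ) :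
    (H ^ (2 * k + 1)) v v = 0 := by
  have h2 : H ^ (2 * k + 1) = H * H ^ (2 * k) := (pow_succ' H _)
  rw [h2, mul_apply]
  apply Finset.sum_eq_zero
  intro b _
  rw [pow_even_col hcol k b]
  by_cases h : b = v
  · subst h; simp [h0]
  · simp [h]

lemma apex_exp_eq_cos {H : Matrix V V ℂ} {v : V} {N : ℕ}
    (h0 : H v v = 0)
    (hcol : ∀ x, (H ^ 2) x v = if x = v then (N : ℂ) else 0) (t : ℝ) :
    exp ((-(t : ℂ) * Complex.I) • H) v v = Complex.cos (Real.sqrt N * t) := by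
  set c : ℂ := -(t : ℂ) * Complex.I with hc
  rw [entry_exp]
  have hterm : ∀ n : ℕ, (n.factorial : ℂ)⁻¹ * ((c • H) ^ n) v v
      = (n.factorial : ℂ)⁻¹ * (c ^ n * (H ^ n) v v) := by
    intro n; rw [smul_pow]; simp [Matrix.smul_apply, smul_eq_mul]
  have hcsq : c ^ 2 = -((t : ℂ) ^ 2) := by
    rw [hc, mul_pow, Complex.I_sq]; ring
  calc (∑' n : ℕ, (n.factorial : ℂ)⁻¹ * ((c • H) ^ n) v v)
      = ∑' n : ℕ, (n.factorial : ℂ)⁻¹ * (c ^ n * (H ^ n) v v) := tsum_congr hterm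
    _ = ∑' k : ℕ, ((2 * k).factorial : ℂ)⁻¹ * (c ^ (2 * k) * (H ^ (2 * k)) v v) := by
        refine (Function.Injective.tsum_eq
          (f := fun n => (n.factorial : ℂ)⁻¹ * (c ^ n * (H ^ n) v v))
          (g := fun k : ℕ => 2 * k)
          (fun a b hab => by simpa using hab) ?_).symm
        intro n hn
        rcases Nat.even_or_odd n with ⟨k, hk⟩ | ⟨k, hk⟩
        · exact ⟨k, show 2 * k = n by omega⟩
        · exfalso
          apply hn
          have hkn : n = 2 * k + 1 := by omega
          subst hkn
          show ((2 * k + 1).factorial : ℂ)⁻¹ * (c ^ (2 * k + 1) * (H ^ (2 * k + 1)) v v) = 0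
          rw [pow_odd_diag h0 hcol k]
          ring
    _ = Complex.cos (Real.sqrt N * t) := by
        rw [Complex.cos_eq_tsum]
        apply tsum_congr
        intro k
        rw [pow_even_col hcol k v, if_pos rfl]
        have hc2 : c ^ (2 * k) = (-1) ^ k * (t : ℂ) ^ (2 * k) := by
          rw [pow_mul, hcsq, neg_pow, ← pow_mul]
        have hzr : (Real.sqrt N * t) ^ (2 * k) = (N : ℝ) ^ k * t ^ (2 * k) := by
          rw [mul_pow, pow_mul (Real.sqrt N), Real.sq_sqrt (Nat.cast_nonneg N)]
        have hz : ((Real.sqrt N : ℂ) * (t : ℂ)) ^ (2 * k) = (N : ℂ) ^ k * (t : ℂ) ^ (2 * k) := by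
          rw [← Complex.ofReal_mul, ← Complex.ofReal_pow, hzr]
          push_cast; ring
        rw [hc2, hz]
        ring


lemma cond_of_swift {H : Matrix V V ℂ} {v : V} {N : ℕ}
    (hherm : H.IsHermitian) (h0 : H v v = 0) (hm2 : (H ^ 2) v v = (N : ℂ))
    (hswift : ∀ t : ℝ, 0 ≤ t →
      ‖(exp ((-(t : ℂ) * Complex.I) • H)) v v‖ ^ 2
        = Real.cos (Real.sqrt N * t) ^ 2) :
    ∀ x, (H ^ 2) x v = if x = v then (N : ℂ) else 0 := by
  letI : SeminormedRing (Matrix V V ℂ) := Matrix.linftyOpSemiNormedRing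
  letI : NormedRing (Matrix V V ℂ) := Matrix.linftyOpNormedRing
  letI : NormedAlgebra ℂ (Matrix V V ℂ) := Matrix.linftyOpNormedAlgebra
  set M : Matrix V V ℂ := (-Complex.I) • H with hM
  -- the entry functionals
  have hsmul : ∀ t : ℝ, (t : ℂ) • M = (-(t : ℂ) * Complex.I) • H := by
    intro t; rw [hM, smul_smul]; congr 1; ring
  set φ : ℕ → ℝ → ℂ := fun k t => (M ^ k * exp ((t : ℂ) • M)) v v with hφ
  have hd : ∀ k (t : ℝ), HasDerivAt (φ k) (φ (k + 1) t) t := by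
    intro k t
    have hL : IsLinearMap ℂ (fun X : Matrix V V ℂ => (M ^ k * X) v v) :=
      ⟨fun X Y => by rw [Matrix.mul_add, Matrix.add_apply],
       fun c X => by rw [Matrix.mul_smul, Matrix.smul_apply, smul_eq_mul]⟩
    let L : Matrix V V ℂ →L[ℂ] ℂ := LinearMap.toContinuousLinearMap hL.mk'
    have h1 : HasDerivAt (fun z : ℂ => exp (z • M)) (exp ((t : ℂ) • M) * M) (t : ℂ) :=
      hasDerivAt_exp_smul_const M (t : ℂ)
    have h2 : HasDerivAt (fun z : ℂ => L (exp (z • M))) (L (exp ((t : ℂ) • M) * M)) (t : ℂ) :=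
      L.hasFDerivAt.comp_hasDerivAt _ h1
    have h3 := h2.comp_ofReal
    have hcomm : M * exp ((t : ℂ) • M) = exp ((t : ℂ) • M) * M :=
      (((Commute.refl M).smul_right ((t : ℂ))).exp_right).eq
    have hval : L (exp ((t : ℂ) • M) * M) = φ (k + 1) t := by
      show (M ^ k * (exp ((t : ℂ) • M) * M)) v v = (M ^ (k + 1) * exp ((t : ℂ) • M)) v v
      rw [← hcomm, ← mul_assoc, ← pow_succ]
    rw [hval] at h3
    exact h3
  -- conjugation symmetry
  have hconj : ∀ t : ℝ, φ 0 (-t) = (starRingEnd ℂ) (φ 0 t) := by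
    intro t
    have hMt : ((-t : ℝ) : ℂ) • M = (((t : ℂ) • M)ᴴ) := by
      rw [conjTranspose_smul, hM, conjTranspose_smul, hherm.eq]
      rw [smul_smul, smul_smul]
      congr 1
      simp [Complex.ext_iff]
    show (M ^ 0 * exp (((-t : ℝ) : ℂ) • M)) v v = _
    rw [pow_zero, one_mul, hMt, Matrix.exp_conjTranspose]
    show ((exp ((t : ℂ) • M))ᴴ) v v = _
    rw [conjTranspose_apply]
    congr 1
    show _ = (M ^ 0 * exp ((t : ℂ) • M)) v v
    rw [pow_zero, one_mul]
  -- f matches the hypothesis form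
  have hf : ∀ t : ℝ, φ 0 t = exp ((-(t : ℂ) * Complex.I) • H) v v := by
    intro t
    show (M ^ 0 * exp ((t : ℂ) • M)) v v = _
    rw [pow_zero, one_mul, hsmul]
  set a : ℝ := Real.sqrt N with ha
  set b : ℂ := 2 * (a : ℂ) with hb
  have hcos : ∀ t : ℝ, φ 0 t * φ 0 (-t) = 1 / 2 + Complex.cos (b * t) / 2 := by
    have key : ∀ t : ℝ, 0 ≤ t → φ 0 t * φ 0 (-t) = 1 / 2 + Complex.cos (b * t) / 2 := by
      intro t ht
      have h1 : ((Real.cos (a * t) ^ 2 : ℝ) : ℂ) = 1 / 2 + Complex.cos (b * t) / 2 := by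
        push_cast
        have harg : b * (t : ℂ) = 2 * ((a : ℂ) * (t : ℂ)) := by rw [hb]; ring
        rw [Complex.cos_sq, harg]
      calc φ 0 t * φ 0 (-t) = ((Complex.normSq (φ 0 t) : ℝ) : ℂ) := by
            rw [hconj t, Complex.mul_conj]
        _ = ((Real.cos (a * t) ^ 2 : ℝ) : ℂ) := by
            rw [← Complex.sq_norm, hf t, hswift t ht]
        _ = _ := h1
    intro t
    rcases le_or_gt 0 t with ht | ht
    · exact key t ht
    · have hk := key (-t) (by linarith)
      rw [neg_neg] at hk
      push_cast at hk
      rw [mul_neg, Complex.cos_neg, mul_comm] at hk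
      exact hk
  -- derivative of t ↦ φ k (-t)
  have hneg : ∀ k (t : ℝ), HasDerivAt (fun s : ℝ => φ k (-s)) (-φ (k + 1) (-t)) t := by
    intro k t
    have := HasDerivAt.scomp (𝕜 := ℝ) t (hd k (-t)) (hasDerivAt_neg t)
    simpa [Function.comp_def] using this
  -- cosine/sine derivatives
  have hdcos : ∀ t : ℝ, HasDerivAt (fun s : ℝ => Complex.cos (b * s)) (-Complex.sin (b * t) * b) t := by
    intro t
    have h1 : HasDerivAt (fun z : ℂ => Complex.cos (b * z)) (-Complex.sin (b * t) * b) (t : ℂ) := by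
      have h2 := HasDerivAt.comp (t : ℂ) (Complex.hasDerivAt_cos (b * (t : ℂ)))
        ((hasDerivAt_id (t : ℂ)).const_mul b)
      simpa [Function.comp_def] using h2
    exact h1.comp_ofReal
  have hdsin : ∀ t : ℝ, HasDerivAt (fun s : ℝ => Complex.sin (b * s)) (Complex.cos (b * t) * b) t := by
    intro t
    have h1 : HasDerivAt (fun z : ℂ => Complex.sin (b * z)) (Complex.cos (b * t) * b) (t : ℂ) := by
      have h2 := HasDerivAt.comp (t : ℂ) (Complex.hasDerivAt_sin (b * (t : ℂ)))
        ((hasDerivAt_id (t : ℂ)).const_mul b)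
      simpa [Function.comp_def] using h2
    exact h1.comp_ofReal
  -- level 1
  have hG1 : ∀ t : ℝ, HasDerivAt (fun s : ℝ => φ 0 s * φ 0 (-s))
      (φ 1 t * φ 0 (-t) + φ 0 t * -φ 1 (-t)) t :=
    fun t => (hd 0 t).mul (hneg 0 t)
  have hC1 : ∀ t : ℝ, HasDerivAt (fun s : ℝ => 1 / 2 + Complex.cos (b * s) / 2)
      (-Complex.sin (b * t) * b / 2) t :=
    fun t => ((hdcos t).div_const 2).const_add (1 / 2)
  have e1 : ∀ t : ℝ, φ 1 t * φ 0 (-t) + φ 0 t * -φ 1 (-t) = -Complex.sin (b * t) * b / 2 := by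
    intro t
    have hg := hG1 t
    rw [funext hcos] at hg
    exact hg.unique (hC1 t)
  -- level 2
  have hG2 : ∀ t : ℝ, HasDerivAt (fun s : ℝ => φ 1 s * φ 0 (-s) + φ 0 s * -φ 1 (-s))
      (φ 2 t * φ 0 (-t) + φ 1 t * -φ 1 (-t) + (φ 1 t * -φ 1 (-t) + φ 0 t * - -φ 2 (-t))) t :=
    fun t => ((hd 1 t).mul (hneg 0 t)).add ((hd 0 t).mul ((hneg 1 t).neg))
  have hC2 : ∀ t : ℝ, HasDerivAt (fun s : ℝ => -Complex.sin (b * s) * b / 2)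
      (-(Complex.cos (b * t) * b) * b / 2) t :=
    fun t => (((hdsin t).neg).mul_const b).div_const 2
  have e2 : ∀ t : ℝ, φ 2 t * φ 0 (-t) + φ 1 t * -φ 1 (-t) + (φ 1 t * -φ 1 (-t) + φ 0 t * - -φ 2 (-t))
      = -(Complex.cos (b * t) * b) * b / 2 := by
    intro t
    have hg := hG2 t
    rw [funext e1] at hg
    exact hg.unique (hC2 t)
  -- level 3
  have hG3 : ∀ t : ℝ, HasDerivAt
      (fun s : ℝ => φ 2 s * φ 0 (-s) + φ 1 s * -φ 1 (-s) + (φ 1 s * -φ 1 (-s) + φ 0 s * - -φ 2 (-s)))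
      (φ 3 t * φ 0 (-t) + φ 2 t * -φ 1 (-t) + (φ 2 t * -φ 1 (-t) + φ 1 t * - -φ 2 (-t))
        + (φ 2 t * -φ 1 (-t) + φ 1 t * - -φ 2 (-t) + (φ 1 t * - -φ 2 (-t) + φ 0 t * - - -φ 3 (-t)))) t :=
    fun t => (((hd 2 t).mul (hneg 0 t)).add ((hd 1 t).mul ((hneg 1 t).neg))).add
      (((hd 1 t).mul ((hneg 1 t).neg)).add ((hd 0 t).mul (((hneg 2 t).neg).neg)))
  have hC3 : ∀ t : ℝ, HasDerivAt (fun s : ℝ => -(Complex.cos (b * s) * b) * b / 2)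
      (-(-Complex.sin (b * t) * b * b) * b / 2) t :=
    fun t => ((((hdcos t).mul_const b).neg).mul_const b).div_const 2
  have e3 : ∀ t : ℝ, φ 3 t * φ 0 (-t) + φ 2 t * -φ 1 (-t) + (φ 2 t * -φ 1 (-t) + φ 1 t * - -φ 2 (-t))
      + (φ 2 t * -φ 1 (-t) + φ 1 t * - -φ 2 (-t) + (φ 1 t * - -φ 2 (-t) + φ 0 t * - - -φ 3 (-t)))
      = -(-Complex.sin (b * t) * b * b) * b / 2 := by
    intro t
    have hg := hG3 t
    rw [funext e2] at hg
    exact hg.unique (hC3 t)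
  -- level 4
  have hG4 : ∀ t : ℝ, HasDerivAt
      (fun s : ℝ => φ 3 s * φ 0 (-s) + φ 2 s * -φ 1 (-s) + (φ 2 s * -φ 1 (-s) + φ 1 s * - -φ 2 (-s))
        + (φ 2 s * -φ 1 (-s) + φ 1 s * - -φ 2 (-s) + (φ 1 s * - -φ 2 (-s) + φ 0 s * - - -φ 3 (-s))))
      (φ 4 t * φ 0 (-t) + φ 3 t * -φ 1 (-t) + (φ 3 t * -φ 1 (-t) + φ 2 t * - -φ 2 (-t))
        + (φ 3 t * -φ 1 (-t) + φ 2 t * - -φ 2 (-t) + (φ 2 t * - -φ 2 (-t) + φ 1 t * - - -φ 3 (-t)))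
        + (φ 3 t * -φ 1 (-t) + φ 2 t * - -φ 2 (-t) + (φ 2 t * - -φ 2 (-t) + φ 1 t * - - -φ 3 (-t))
          + (φ 2 t * - -φ 2 (-t) + φ 1 t * - - -φ 3 (-t)
            + (φ 1 t * - - -φ 3 (-t) + φ 0 t * - - - -φ 4 (-t))))) t :=
    fun t => ((((hd 3 t).mul (hneg 0 t)).add ((hd 2 t).mul ((hneg 1 t).neg))).add
      (((hd 2 t).mul ((hneg 1 t).neg)).add ((hd 1 t).mul (((hneg 2 t).neg).neg)))).add
      (((((hd 2 t).mul ((hneg 1 t).neg)).add ((hd 1 t).mul (((hneg 2 t).neg).neg))).add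
        (((hd 1 t).mul (((hneg 2 t).neg).neg)).add ((hd 0 t).mul ((((hneg 3 t).neg).neg).neg)))))
  have hC4 : ∀ t : ℝ, HasDerivAt (fun s : ℝ => -(-Complex.sin (b * s) * b * b) * b / 2)
      (-(-(Complex.cos (b * t) * b) * b * b) * b / 2) t :=
    fun t => (((((hdsin t).neg).mul_const b).mul_const b).neg.mul_const b).div_const 2
  have e4 : ∀ t : ℝ, φ 4 t * φ 0 (-t) + φ 3 t * -φ 1 (-t) + (φ 3 t * -φ 1 (-t) + φ 2 t * - -φ 2 (-t))
        + (φ 3 t * -φ 1 (-t) + φ 2 t * - -φ 2 (-t) + (φ 2 t * - -φ 2 (-t) + φ 1 t * - - -φ 3 (-t)))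
        + (φ 3 t * -φ 1 (-t) + φ 2 t * - -φ 2 (-t) + (φ 2 t * - -φ 2 (-t) + φ 1 t * - - -φ 3 (-t))
          + (φ 2 t * - -φ 2 (-t) + φ 1 t * - - -φ 3 (-t)
            + (φ 1 t * - - -φ 3 (-t) + φ 0 t * - - - -φ 4 (-t))))
      = -(-(Complex.cos (b * t) * b) * b * b) * b / 2 := by
    intro t
    have hg := hG4 t
    rw [funext e3] at hg
    exact hg.unique (hC4 t)
  -- evaluate at 0
  have hφ0 : ∀ k : ℕ, φ k 0 = (-Complex.I) ^ k * (H ^ k) v v := by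
    intro k
    show (M ^ k * exp (((0 : ℝ) : ℂ) • M)) v v = _
    rw [Complex.ofReal_zero, zero_smul, exp_zero, mul_one, hM, smul_pow, Matrix.smul_apply, smul_eq_mul]
  have q := e4 0
  rw [neg_zero] at q
  rw [hφ0 0, hφ0 1, hφ0 2, hφ0 3, hφ0 4] at q
  rw [Complex.ofReal_zero, mul_zero, Complex.cos_zero] at q
  have hI2 : (-Complex.I) ^ 2 = -1 := by
    rw [neg_pow, Complex.I_sq]; ring
  have hI4 : (-Complex.I) ^ 4 = 1 := by
    rw [show (4 : ℕ) = 2 * 2 from rfl, pow_mul, hI2]; ring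
  simp only [pow_zero, pow_one, one_mul, mul_one, Matrix.one_apply_eq, h0, hm2, hI2, hI4,
    mul_zero, zero_mul, neg_zero, neg_neg, add_zero, zero_add] at q
  have hb2 : ((a : ℝ) : ℂ) ^ 2 = (N : ℂ) := by
    rw [← Complex.ofReal_pow, ha, Real.sq_sqrt (Nat.cast_nonneg N)]
    push_cast
    rfl
  have h4 : (H ^ 4) v v = (N : ℂ) ^ 2 := by
    rw [hb] at q
    linear_combination q / 2 + (4 * ((a : ℝ) : ℂ) ^ 2 + 4 * (N : ℂ)) * hb2
  -- final extraction via sum of squares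
  have hH2 : (H ^ 2).IsHermitian := hherm.pow 2
  have hsumC : ∑ x : V, ((Complex.normSq ((H ^ 2) x v) : ℝ) : ℂ) = (N : ℂ) ^ 2 := by
    rw [← h4, show (4 : ℕ) = 2 + 2 from rfl, pow_add, mul_apply]
    apply Finset.sum_congr rfl
    intro x _
    rw [← hH2.apply v x]
    exact Complex.normSq_eq_conj_mul_self
  have hsumR : ∑ x : V, Complex.normSq ((H ^ 2) x v) = (N : ℝ) ^ 2 := by
    exact_mod_cast hsumC
  intro x
  by_cases hx : x = v
  · subst hx; rw [if_pos rfl]; exact hm2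
  · rw [if_neg hx]
    have hvterm : Complex.normSq ((H ^ 2) v v) = (N : ℝ) ^ 2 := by
      rw [hm2, Complex.normSq_natCast]
      ring
    have hsplit := Finset.add_sum_erase Finset.univ
      (fun y => Complex.normSq ((H ^ 2) y v)) (Finset.mem_univ v)
    have hrest : ∑ y ∈ Finset.univ.erase v, Complex.normSq ((H ^ 2) y v) = 0 := by
      have h1 : Complex.normSq ((H ^ 2) v v)
          + ∑ y ∈ Finset.univ.erase v, Complex.normSq ((H ^ 2) y v)
          = (N : ℝ) ^ 2 := by rw [hsplit]; exact hsumR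
      rw [hvterm] at h1
      linarith
    have hnn : ∀ y ∈ Finset.univ.erase v, 0 ≤ Complex.normSq ((H ^ 2) y v) :=
      fun y _ => Complex.normSq_nonneg _
    have hx0 : Complex.normSq ((H ^ 2) x v) = 0 :=
      (Finset.sum_eq_zero_iff_of_nonneg hnn).mp hrest x
        (Finset.mem_erase.mpr ⟨hx, Finset.mem_univ x⟩)
    exact Complex.normSq_eq_zero.mp hx0


lemma cone_m2 {W : Type*} [Fintype W] [DecidableEq W] {G : SimpleGraph W}
    {H : Matrix (Option W) (Option W) ℂ} (hC : IsChiralAdjacency (coneGraph G) H) :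
    (H ^ 2) none none = (Fintype.card W : ℂ) := by
  obtain ⟨hherm, habs, hzero⟩ := hC
  rw [pow_two, mul_apply, Fintype.sum_option]
  have h0 : H none none = 0 := hzero none none (fun h => h)
  have hone : ∀ a : W, H none (some a) * H (some a) none = 1 := by
    intro a
    have h1 : star (H none (some a)) = H (some a) none := hherm.apply (some a) none
    rw [← h1, show (star (H none (some a))) = (starRingEnd ℂ) (H none (some a)) from rfl,
      Complex.mul_conj, Complex.normSq_eq_norm_sq, habs none (some a) trivial]
    norm_num
  rw [h0, zero_mul, zero_add]
  simp [hone]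

/-- Glue two cone matrices along the apex. -/
def glue {N₁ N₂ : ℕ} (H₁ : Matrix (Option (Fin N₁)) (Option (Fin N₁)) ℂ)
    (H₂ : Matrix (Option (Fin N₂)) (Option (Fin N₂)) ℂ) :
    Matrix (Option (Fin N₁ ⊕ Fin N₂)) (Option (Fin N₁ ⊕ Fin N₂)) ℂ :=
  fun x y => match x, y with
  | none, none => 0
  | none, some (Sum.inl a) => H₁ none (some a)
  | none, some (Sum.inr a) => H₂ none (some a)
  | some (Sum.inl a), none => H₁ (some a) none
  | some (Sum.inr a), none => H₂ (some a) none
  | some (Sum.inl a), some (Sum.inl b) => H₁ (some a) (some b)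
  | some (Sum.inr a), some (Sum.inr b) => H₂ (some a) (some b)
  | some (Sum.inl _), some (Sum.inr _) => 0
  | some (Sum.inr _), some (Sum.inl _) => 0

end SwiftAux

open SwiftAux


/-- If the cones over `G₁` (on `N₁` vertices) and over `G₂` (on `N₂` vertices) each admit
a swift chiral quantum walk from their apex, then so does the cone over the disjoint
union `G₁ ⊔ G₂`, with return probability `cos²(√(N₁+N₂)·t)` at the apex. -/
theorem swift_stmt_14 {N₁ N₂ : ℕ}
    (G₁ : SimpleGraph (Fin N₁)) (G₂ : SimpleGraph (Fin N₂))
    (h₁ : ∃ H₁ : Matrix (Option (Fin N₁)) (Option (Fin N₁)) ℂ,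
      IsChiralAdjacency (coneGraph G₁) H₁ ∧ ∀ t : ℝ, 0 ≤ t →
        ‖(NormedSpace.exp ((-(t : ℂ) * Complex.I) • H₁)) none none‖ ^ 2 =
          Real.cos (Real.sqrt N₁ * t) ^ 2)
    (h₂ : ∃ H₂ : Matrix (Option (Fin N₂)) (Option (Fin N₂)) ℂ,
      IsChiralAdjacency (coneGraph G₂) H₂ ∧ ∀ t : ℝ, 0 ≤ t →
        ‖(NormedSpace.exp ((-(t : ℂ) * Complex.I) • H₂)) none none‖ ^ 2 =
          Real.cos (Real.sqrt N₂ * t) ^ 2) :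
    ∃ H : Matrix (Option (Fin N₁ ⊕ Fin N₂)) (Option (Fin N₁ ⊕ Fin N₂)) ℂ,
      IsChiralAdjacency (coneGraph (G₁ ⊕g G₂)) H ∧ ∀ t : ℝ, 0 ≤ t →
        ‖(NormedSpace.exp ((-(t : ℂ) * Complex.I) • H)) none none‖ ^ 2 =
          Real.cos (Real.sqrt (N₁ + N₂) * t) ^ 2 := by
  classical
  obtain ⟨H₁, hC₁, hs₁⟩ := h₁
  obtain ⟨H₂, hC₂, hs₂⟩ := h₂
  obtain ⟨hherm₁, habs₁, hzero₁⟩ := hC₁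
  obtain ⟨hherm₂, habs₂, hzero₂⟩ := hC₂
  have h0₁ : H₁ none none = 0 := hzero₁ none none (fun h => h)
  have h0₂ : H₂ none none = 0 := hzero₂ none none (fun h => h)
  have hm2₁ : (H₁ ^ 2) none none = ((N₁ : ℕ) : ℂ) := by
    simpa using cone_m2 ⟨hherm₁, habs₁, hzero₁⟩
  have hm2₂ : (H₂ ^ 2) none none = ((N₂ : ℕ) : ℂ) := by
    simpa using cone_m2 ⟨hherm₂, habs₂, hzero₂⟩
  have hcol₁ := cond_of_swift hherm₁ h0₁ hm2₁ hs₁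
  have hcol₂ := cond_of_swift hherm₂ h0₂ hm2₂ hs₂
  set Hb := glue H₁ H₂ with hHb
  have hhermb : Hb.IsHermitian := by
    apply Matrix.ext
    rintro (_ | a | a) (_ | b | b) <;>
      simp only [Matrix.conjTranspose_apply, hHb, glue] <;>
      first
        | exact hherm₁.apply _ _
        | exact hherm₂.apply _ _
        | simp
  have habsb : ∀ j k, (coneGraph (G₁ ⊕g G₂)).Adj j k → ‖Hb j k‖ = 1 := by
    rintro (_ | a | a) (_ | b | b) hadj
    · exact absurd hadj (fun h => h)
    · exact habs₁ none (some b) trivial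
    · exact habs₂ none (some b) trivial
    · exact habs₁ (some a) none trivial
    · exact habs₁ (some a) (some b) hadj
    · exact absurd hadj (by simp [coneGraph])
    · exact habs₂ (some a) none trivial
    · exact absurd hadj (by simp [coneGraph])
    · exact habs₂ (some a) (some b) hadj
  have hzerob : ∀ j k, ¬ (coneGraph (G₁ ⊕g G₂)).Adj j k → Hb j k = 0 := by
    rintro (_ | a | a) (_ | b | b) hadj
    · rfl
    · exact absurd trivial hadj
    · exact absurd trivial hadj
    · exact absurd trivial hadj
    · exact hzero₁ (some a) (some b) hadj
    · rfl
    · exact absurd trivial hadj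
    · rfl
    · exact hzero₂ (some a) (some b) hadj
  have h0b : Hb none none = 0 := rfl
  have hm2b : (Hb ^ 2) none none = ((N₁ + N₂ : ℕ) : ℂ) := by
    have := cone_m2 (G := G₁ ⊕g G₂) ⟨hhermb, habsb, hzerob⟩
    simpa using this
  have hcolb : ∀ x, (Hb ^ 2) x none = if x = none then ((N₁ + N₂ : ℕ) : ℂ) else 0 := by
    rintro (_ | a | a)
    · simpa using hm2b
    · rw [if_neg (by simp)]
      have hgoal : (Hb ^ 2) (some (Sum.inl a)) none = (H₁ ^ 2) (some a) none := by
        rw [pow_two, Matrix.mul_apply, pow_two, Matrix.mul_apply]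
        rw [Fintype.sum_option, Fintype.sum_sum_type, Fintype.sum_option]
        simp [hHb, glue, h0₁]
      rw [hgoal, hcol₁ (some a), if_neg (by simp)]
    · rw [if_neg (by simp)]
      have hgoal : (Hb ^ 2) (some (Sum.inr a)) none = (H₂ ^ 2) (some a) none := by
        rw [pow_two, Matrix.mul_apply, pow_two, Matrix.mul_apply]
        rw [Fintype.sum_option, Fintype.sum_sum_type, Fintype.sum_option]
        simp [hHb, glue, h0₂]
      rw [hgoal, hcol₂ (some a), if_neg (by simp)]
  refine ⟨Hb, ⟨hhermb, habsb, hzerob⟩, ?_⟩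
  intro t ht
  rw [apex_exp_eq_cos (N := N₁ + N₂) h0b hcolb t]
  rw [← Complex.ofReal_mul, ← Complex.ofReal_cos, Complex.norm_real, Real.norm_eq_abs, sq_abs]
  push_cast
  ring
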